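/- If x* satisfies the single-virus SIS fixed point equations for (A, τ), where A is the adjacency matrix of a connected undirected graph on N ≥ 1 vertices and τ > 0, then τ·λ(A) ≥ (1/N)·Σ_{i=1}^N 1/(1 − x*_i). -/

import Mathlib

open Matrix Finset

/-- Spectral radius of a real matrix: supremum of absolute values of its complex eigenvalues. -/
noncomputable def specRad {N : ℕ} (M : Matrix (Fin N) (Fin N) ℝ) : ℝ :=
  sSup ((fun z => ‖z‖) '' spectrum ℂ (M.map Complex.ofReal))

/-- `A` is the adjacency matrix of a connected undirected graph:
symmetric, 0/1 entries, zero diagonal, and irreducible (connectivity). -/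
def IsConnectedAdjMatrix {N : ℕ} (A : Matrix (Fin N) (Fin N) ℝ) : Prop :=
  A.IsSymm ∧ (∀ i j, A i j = 0 ∨ A i j = 1) ∧ (∀ i, A i i = 0) ∧
    (∀ i j, i ≠ j → ∃ k : ℕ, 0 < (A ^ k) i j)

/-- `x` satisfies the single-virus SIS fixed point equations for `(A, τ)`. -/
def IsSISFixedPoint {N : ℕ} (A : Matrix (Fin N) (Fin N) ℝ) (τ : ℝ)
    (x : Fin N → ℝ) : Prop :=
  (∀ i, 0 < x i ∧ x i < 1) ∧ (∀ i, ∑ j, A i j * x j = x i / (τ * (1 - x i)))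

/-- Every eigenvalue of a real Hermitian matrix is at most its spectral radius. -/
lemma eig_le_specRad {N : ℕ} {A : Matrix (Fin N) (Fin N) ℝ} (hH : A.IsHermitian) (i : Fin N) :
    hH.eigenvalues i ≤ specRad A := by
  set μ := hH.eigenvalues i with hμ
  have hmem : μ ∈ spectrum ℝ A := hH.eigenvalues_mem_spectrum_real i
  have hdet : (algebraMap ℝ (Matrix (Fin N) (Fin N) ℝ) μ - A).det = 0 := by
    by_contra h
    exact (spectrum.mem_iff.mp hmem)
      ((Matrix.isUnit_iff_isUnit_det _).mpr (isUnit_iff_ne_zero.mpr h))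
  have hmapeq : (algebraMap ℝ (Matrix (Fin N) (Fin N) ℝ) μ - A).map Complex.ofReal
      = algebraMap ℂ (Matrix (Fin N) (Fin N) ℂ) (μ : ℂ) - A.map Complex.ofReal := by
    ext i j
    simp [Matrix.map_apply, Matrix.algebraMap_matrix_apply]
    split <;> simp
  have hdetC : (algebraMap ℂ (Matrix (Fin N) (Fin N) ℂ) (μ : ℂ) - A.map Complex.ofReal).det = 0 := by
    rw [← hmapeq]
    have : ((algebraMap ℝ (Matrix (Fin N) (Fin N) ℝ)) μ - A).map Complex.ofReal
        = Complex.ofRealHom.mapMatrix ((algebraMap ℝ (Matrix (Fin N) (Fin N) ℝ)) μ - A) := rfl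
    rw [this, ← RingHom.map_det]
    simp [hdet]
  have hmemC : (μ : ℂ) ∈ spectrum ℂ (A.map Complex.ofReal) := by
    rw [spectrum.mem_iff]
    intro h
    exact absurd ((Matrix.isUnit_iff_isUnit_det _).mp h) (by simp [hdetC])
  have hbdd : BddAbove ((fun z => ‖z‖) '' spectrum ℂ (A.map Complex.ofReal)) :=
    ((Matrix.finite_spectrum _).image _).bddAbove
  have : ‖(μ : ℂ)‖ ≤ specRad A := le_csSup hbdd ⟨_, hmemC, rfl⟩
  calc μ ≤ |μ| := le_abs_self μ
    _ = ‖(μ : ℂ)‖ := by simp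
    _ ≤ specRad A := this

/-- Rayleigh quotient bound: the quadratic form of a real symmetric matrix is bounded by the
spectral radius times the squared norm. -/
lemma rayleigh_le_specRad {N : ℕ} {A : Matrix (Fin N) (Fin N) ℝ} (hH : A.IsHermitian)
    (v : Fin N → ℝ) :
    v ⬝ᵥ (A *ᵥ v) ≤ specRad A * (v ⬝ᵥ v) := by
  classical
  have hspec : ∀ i, hH.eigenvalues i ≤ specRad A := eig_le_specRad hH
  set U : Matrix (Fin N) (Fin N) ℝ := (hH.eigenvectorUnitary : Matrix (Fin N) (Fin N) ℝ) with hU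
  set μ : Fin N → ℝ := hH.eigenvalues with hmu
  set w : Fin N → ℝ := v ᵥ* U with hw
  have hUU : U * star U = 1 := (Matrix.mem_unitaryGroup_iff).mp hH.eigenvectorUnitary.2
  have hA : A = U * Matrix.diagonal μ * star U := by
    simpa using hH.spectral_theorem
  have hsw : (star U) *ᵥ v = w := by
    rw [Matrix.star_eq_conjTranspose, Matrix.conjTranspose_eq_transpose_of_trivial,
      Matrix.mulVec_transpose, hw]
  have hQ : v ⬝ᵥ (A *ᵥ v) = ∑ i, μ i * (w i)^2 := by
    rw [hA]
    rw [← Matrix.mulVec_mulVec, ← Matrix.mulVec_mulVec, Matrix.dotProduct_mulVec (R := ℝ) v U,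
      Matrix.dotProduct_mulVec, ← hw, hsw]
    simp [Matrix.vecMul_diagonal, dotProduct]
    exact Finset.sum_congr rfl fun i _ => by ring
  have hNorm : v ⬝ᵥ v = ∑ i, (w i)^2 := by
    have : w ⬝ᵥ w = v ⬝ᵥ v := by
      rw [← hsw, Matrix.dotProduct_mulVec, ← Matrix.mulVec_transpose]
      have hT : (star U)ᵀ = U := by
        rw [Matrix.star_eq_conjTranspose, Matrix.conjTranspose_eq_transpose_of_trivial,
          Matrix.transpose_transpose]
      rw [hT, Matrix.mulVec_mulVec, hUU, Matrix.one_mulVec]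
    rw [← this]
    simp [dotProduct, sq]
  rw [hQ, hNorm, Finset.mul_sum]
  exact Finset.sum_le_sum fun i _ => by
    have h2 : (0:ℝ) ≤ (w i)^2 := sq_nonneg _
    exact mul_le_mul_of_nonneg_right (hspec i) h2

/-- If `x*` satisfies the single-virus SIS fixed point equations for `(A, τ)`,
where `A` is the adjacency matrix of a connected undirected graph on `N ≥ 1` vertices and
`τ > 0`, then `τ·λ(A) ≥ (1/N)·Σ_i 1/(1 − x*_i)`. -/
theorem tau_lambda_lower_bound {N : ℕ} (hN : 1 ≤ N)
    (A : Matrix (Fin N) (Fin N) ℝ) (hA : IsConnectedAdjMatrix A)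
    (τ : ℝ) (hτ : 0 < τ)
    (xstar : Fin N → ℝ) (hx : IsSISFixedPoint A τ xstar) :
    (1 / (N : ℝ)) * ∑ i, 1 / (1 - xstar i) ≤ τ * specRad A := by
  classical
  obtain ⟨hAsymm, -, -, -⟩ := hA
  obtain ⟨hb, heq⟩ := hx
  have hH : A.IsHermitian := by
    rw [Matrix.IsHermitian, Matrix.conjTranspose_eq_transpose_of_trivial]
    exact hAsymm
  set v := xstar with hv
  have h1 : ∀ i, 0 < 1 - v i := fun i => by linarith [(hb i).2]
  have hNe : Nonempty (Fin N) := ⟨⟨0, hN⟩⟩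
  have hS2 : 0 < ∑ i, (v i)^2 :=
    Finset.sum_pos (fun i _ => pow_pos (hb i).1 2) Finset.univ_nonempty
  -- quadratic form from the fixed-point equations
  have hQ : v ⬝ᵥ (A *ᵥ v) = ∑ i, (v i)^2 / (τ * (1 - v i)) := by
    simp only [dotProduct, Matrix.mulVec]
    refine Finset.sum_congr rfl fun i _ => ?_
    rw [heq i]
    ring
  have hvv : v ⬝ᵥ v = ∑ i, (v i)^2 := by simp [dotProduct, sq]
  have hR : ∑ i, (v i)^2 / (τ * (1 - v i)) ≤ specRad A * ∑ i, (v i)^2 := by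
    rw [← hQ, ← hvv]; exact rayleigh_le_specRad hH v
  -- Chebyshev's sum inequality
  have hmono : MonovaryOn (fun i => (v i)^2) (fun i => 1 / (1 - v i)) (↑(Finset.univ : Finset (Fin N)) : Set (Fin N)) := by
    intro i _ j _ hg
    have hij : v i < v j := by
      by_contra h
      push_neg at h
      have : 1 / (1 - v j) ≤ 1 / (1 - v i) :=
        one_div_le_one_div_of_le (h1 i) (by linarith)
      exact absurd hg (not_lt.mpr this)
    exact pow_le_pow_left₀ (le_of_lt (hb i).1) (le_of_lt hij) 2
  have hcheb := hmono.sum_mul_sum_le_card_mul_sum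
  rw [Finset.card_univ, Fintype.card_fin] at hcheb
  have hfg : ∀ i : Fin N, (v i)^2 * (1 / (1 - v i)) = τ * ((v i)^2 / (τ * (1 - v i))) := by
    intro i
    have hτ' : τ ≠ 0 := ne_of_gt hτ
    have hc : (1 - v i) ≠ 0 := ne_of_gt (h1 i)
    field_simp
  have hcheb' : (∑ i, (v i)^2) * (∑ i, 1 / (1 - v i))
      ≤ (N : ℝ) * (τ * ∑ i, (v i)^2 / (τ * (1 - v i))) := by
    calc (∑ i, (v i)^2) * (∑ i, 1 / (1 - v i))
        ≤ (N : ℝ) * ∑ i, (v i)^2 * (1 / (1 - v i)) := hcheb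
      _ = (N : ℝ) * (τ * ∑ i, (v i)^2 / (τ * (1 - v i))) := by
          congr 1
          rw [Finset.mul_sum]
          exact Finset.sum_congr rfl fun i _ => hfg i
  have hmain : (∑ i, (v i)^2) * (∑ i, 1 / (1 - v i))
      ≤ (N : ℝ) * (τ * specRad A) * (∑ i, (v i)^2) := by
    calc (∑ i, (v i)^2) * (∑ i, 1 / (1 - v i))
        ≤ (N : ℝ) * (τ * ∑ i, (v i)^2 / (τ * (1 - v i))) := hcheb'
      _ ≤ (N : ℝ) * (τ * (specRad A * ∑ i, (v i)^2)) := by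
          have hNn : (0:ℝ) ≤ (N : ℝ) := Nat.cast_nonneg N
          exact mul_le_mul_of_nonneg_left
            (mul_le_mul_of_nonneg_left hR (le_of_lt hτ)) hNn
      _ = (N : ℝ) * (τ * specRad A) * (∑ i, (v i)^2) := by ring
  have hsum_le : (∑ i, 1 / (1 - v i)) ≤ (N : ℝ) * (τ * specRad A) := by
    have := (mul_le_mul_iff_right₀ hS2).mp (by linarith [hmain] :
      (∑ i, (v i)^2) * (∑ i, 1 / (1 - v i)) ≤ (∑ i, (v i)^2) * ((N : ℝ) * (τ * specRad A)))
    exact this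
  have hNpos : (0:ℝ) < (N : ℝ) := by exact_mod_cast hN
  rw [div_mul_eq_mul_div, one_mul, div_le_iff₀ hNpos]
  linarith [hsum_le]
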